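/- Let ξ = (ξ_1, ξ_2, …) be an infinite sequence of random variables with values in a standard Borel space S, with empirical distributions η_n = n⁻¹ ∑_{i=1}^n δ_{ξ_i}. If η is a reverse measure-valued martingale with respect to the tail σ-fields 𝒯_n = σ(η_n, η_{n+1}, …), then for every n ≥ 2 one has (ξ_1, ξ_n, ξ_{n+1}, ξ_{n+2}, …) equal in distribution to (ξ_n, ξ_1, ξ_{n+1}, ξ_{n+2}, …); in particular ξ_1 has the same distribution as ξ_n for every n. -/

import Mathlib

open MeasureTheory ProbabilityTheory
open scoped ENNReal

set_option linter.unusedSectionVars false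
set_option maxHeartbeats 1000000

/-- The empirical distribution `η_n = n⁻¹ ∑_{i=1}^n δ_{ξ_i}` of the first `n` terms of
the sequence `ξ` (indexed from `0`). -/
noncomputable def empDist {Ω S : Type*} [MeasurableSpace S] (ξ : ℕ → Ω → S) (n : ℕ) (ω : Ω) :
    Measure S :=
  (n : ℝ≥0∞)⁻¹ • ∑ i ∈ Finset.range n, Measure.dirac (ξ i ω)

/-- The tail σ-field `𝒯_n = σ(η_n, η_{n+1}, …)` generated by the empirical distributions. -/
noncomputable def tailField {Ω S : Type*} [MeasurableSpace S] (ξ : ℕ → Ω → S) (n : ℕ) :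
    MeasurableSpace Ω :=
  ⨆ k, ⨆ _ : n ≤ k, MeasurableSpace.comap (empDist ξ k) inferInstance

/-- `η` is a reverse measure-valued martingale: for every bounded measurable `f` and all
`1 ≤ k ≤ n`, `E[η_k f | 𝒯_n] = η_n f` a.s. -/
def IsReverseMVM {Ω S : Type*} [MeasurableSpace Ω] [MeasurableSpace S]
    (P : Measure Ω) (ξ : ℕ → Ω → S) : Prop :=
  ∀ f : S → ℝ, Measurable f → (∃ C, ∀ x, |f x| ≤ C) →
    ∀ k n : ℕ, 1 ≤ k → k ≤ n →
      P[(fun ω => ∫ x, f x ∂(empDist ξ k ω)) | tailField ξ n]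
        =ᵐ[P] fun ω => ∫ x, f x ∂(empDist ξ n ω)

/-- `ξ` is exchangeable: any finite subfamily with distinct indices has the same joint
distribution as the initial segment of the same length. -/
def Exchangeable {Ω S : Type*} [MeasurableSpace Ω] [MeasurableSpace S]
    (P : Measure Ω) (ξ : ℕ → Ω → S) : Prop :=
  ∀ (m : ℕ) (k : Fin m → ℕ), Function.Injective k →
    Measure.map (fun ω (i : Fin m) => ξ (k i) ω) P
      = Measure.map (fun ω (i : Fin m) => ξ (i : ℕ) ω) P

/-- `ξ` is stationary: the shifted sequence has the same distribution as `ξ`. -/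
def Stationary {Ω S : Type*} [MeasurableSpace Ω] [MeasurableSpace S]
    (P : Measure Ω) (ξ : ℕ → Ω → S) : Prop :=
  Measure.map (fun ω (i : ℕ) => ξ (i + 1) ω) P = Measure.map (fun ω (i : ℕ) => ξ i ω) P

/-- `ξ` is a homogeneous Markov sequence with transition kernel `κ`. -/
def IsHomogeneousMarkov {Ω S : Type*} [MeasurableSpace Ω] [MeasurableSpace S]
    (P : Measure Ω) (ξ : ℕ → Ω → S) : Prop :=
  ∃ κ : Kernel S S, IsMarkovKernel κ ∧
    ∀ n : ℕ, ∀ f : S → ℝ, Measurable f → (∃ C, ∀ x, |f x| ≤ C) →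
      P[(fun ω => f (ξ (n + 1) ω)) |
          MeasurableSpace.comap (fun ω (i : Fin (n + 1)) => ξ (i : ℕ) ω) inferInstance]
        =ᵐ[P] fun ω => ∫ y, f y ∂(κ (ξ n ω))

section AuxChi

/-- The real-valued indicator of a set. -/
noncomputable def chi {S : Type*} (A : Set S) : S → ℝ := A.indicator 1

lemma chi_meas {S : Type*} [MeasurableSpace S] {A : Set S} (hA : MeasurableSet A) :
    Measurable (chi A) := measurable_one.indicator hA

lemma chi_bound {S : Type*} (A : Set S) (x : S) : |chi A x| ≤ 1 := by
  unfold chi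
  by_cases h : x ∈ A <;> simp [Set.indicator_apply, h]

lemma chi_nonneg {S : Type*} (A : Set S) (x : S) : 0 ≤ chi A x := by
  unfold chi; by_cases h : x ∈ A <;> simp [Set.indicator_apply, h]

lemma chi_le_one {S : Type*} (A : Set S) (x : S) : chi A x ≤ 1 := by
  unfold chi; by_cases h : x ∈ A <;> simp [Set.indicator_apply, h]

lemma chi_mul {S : Type*} (A B : Set S) (x : S) : chi A x * chi B x = chi (A ∩ B) x := by
  unfold chi
  by_cases hA : x ∈ A <;> by_cases hB : x ∈ B <;>
    simp [Set.indicator_apply, hA, hB, Set.mem_inter_iff]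

lemma chi_comp {S Ω : Type*} (A : Set S) (f : Ω → S) (ω : Ω) :
    chi A (f ω) = chi (f ⁻¹' A) ω := by
  unfold chi
  by_cases h : f ω ∈ A <;> simp [Set.indicator_apply, h]

lemma chi_integral {Ω : Type*} [MeasurableSpace Ω] {P : Measure Ω} {U : Set Ω}
    (hU : MeasurableSet U) : ∫ ω, chi U ω ∂P = (P U).toReal :=
  integral_indicator_one hU

lemma abs_mul_le_one {a b : ℝ} (ha : |a| ≤ 1) (hb : |b| ≤ 1) : |a * b| ≤ 1 := by
  rw [abs_mul]; nlinarith [abs_nonneg a, abs_nonneg b]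

lemma integrable_dirac'' {S : Type*} [MeasurableSpace S] {f : S → ℝ}
    (hf : StronglyMeasurable f) (a : S) : Integrable f (Measure.dirac a) :=
  (integrable_const (f a)).congr (ae_eq_dirac' hf.measurable).symm

end AuxChi

section Aux

variable {Ω S : Type*} [mΩ : MeasurableSpace Ω] [MeasurableSpace S]

lemma integral_empDist (ξ : ℕ → Ω → S) (n : ℕ) (ω : Ω) {f : S → ℝ}
    (hf : StronglyMeasurable f) :
    ∫ x, f x ∂(empDist ξ n ω) = (n : ℝ)⁻¹ * ∑ i ∈ Finset.range n, f (ξ i ω) := by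
  rw [empDist, integral_smul_measure,
    integral_finset_sum_measure (fun i _ => integrable_dirac'' hf _)]
  simp [integral_dirac' _ _ hf, ENNReal.toReal_inv, smul_eq_mul]

lemma empDist_apply (ξ : ℕ → Ω → S) (k : ℕ) (ω : Ω) {A : Set S} (hA : MeasurableSet A) :
    empDist ξ k ω A = (k : ℝ≥0∞)⁻¹ * ∑ i ∈ Finset.range k, A.indicator 1 (ξ i ω) := by
  simp [empDist, Measure.smul_apply, Measure.finset_sum_apply, Measure.dirac_apply' _ hA,
    smul_eq_mul]

lemma measurable_empDist {ξ : ℕ → Ω → S} (hmeas : ∀ i, Measurable (ξ i)) (k : ℕ) :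
    Measurable (empDist ξ k) := by
  apply Measure.measurable_of_measurable_coe
  intro A hA
  simp only [fun ω => empDist_apply ξ k ω hA]
  exact (Finset.measurable_sum _ fun i _ =>
    (measurable_one.indicator hA).comp (hmeas i)).const_mul _

lemma tailField_le {ξ : ℕ → Ω → S} (hmeas : ∀ i, Measurable (ξ i)) (n : ℕ) :
    tailField ξ n ≤ mΩ :=
  iSup_le fun k => iSup_le fun _ => (measurable_empDist hmeas k).comap_le

lemma tailField_antitone (ξ : ℕ → Ω → S) {n n' : ℕ} (h : n ≤ n') :
    tailField ξ n' ≤ tailField ξ n :=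
  iSup_le fun k => iSup_le fun hk =>
    le_iSup₂ (f := fun k (_ : n ≤ k) => MeasurableSpace.comap (empDist ξ k) inferInstance)
      k (h.trans hk)

lemma measurable_tail_apply (ξ : ℕ → Ω → S) {k n : ℕ} (hkn : n ≤ k) {A : Set S}
    (hA : MeasurableSet A) :
    Measurable[tailField ξ n] fun ω => empDist ξ k ω A := by
  have h1 : Measurable[MeasurableSpace.comap (empDist ξ k) inferInstance] (empDist ξ k) :=
    measurable_iff_comap_le.mpr le_rfl
  have h2 := (Measure.measurable_coe hA).comp h1
  exact h2.mono
    (le_iSup₂ (f := fun k (_ : n ≤ k) => MeasurableSpace.comap (empDist ξ k) inferInstance)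
      k hkn) le_rfl

lemma mul_empDist_apply (ξ : ℕ → Ω → S) {k : ℕ} (hk : 1 ≤ k) (ω : Ω) {A : Set S}
    (hA : MeasurableSet A) :
    (k : ℝ≥0∞) * empDist ξ k ω A = ∑ i ∈ Finset.range k, A.indicator 1 (ξ i ω) := by
  rw [empDist_apply ξ k ω hA, ← mul_assoc, ENNReal.mul_inv_cancel, one_mul]
  · exact_mod_cast (Nat.pos_of_ne_zero (by omega)).ne'
  · exact ENNReal.natCast_ne_top k

lemma sum_indicator_ne_top (ξ : ℕ → Ω → S) (k : ℕ) (ω : Ω) (A : Set S) :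
    (∑ i ∈ Finset.range k, A.indicator (1 : S → ℝ≥0∞) (ξ i ω)) ≠ ∞ := by
  have : (∑ i ∈ Finset.range k, A.indicator (1 : S → ℝ≥0∞) (ξ i ω))
      ≤ ∑ _i ∈ Finset.range k, 1 :=
    Finset.sum_le_sum fun i _ => Set.indicator_le_self' (fun _ _ => zero_le_one) _
  exact (this.trans_lt (by simp)).ne

lemma measurable_tail_xi {ξ : ℕ → Ω → S} {n j : ℕ} (hn : 1 ≤ n) (hnj : n ≤ j) :
    Measurable[tailField ξ n] (ξ j) := by
  intro A hA
  have key : ξ j ⁻¹' A =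
      (fun ω => ((j : ℝ≥0∞) + 1) * empDist ξ (j + 1) ω A - (j : ℝ≥0∞) * empDist ξ j ω A)
        ⁻¹' {1} := by
    ext ω
    have h1 : ((j : ℝ≥0∞) + 1) * empDist ξ (j + 1) ω A
        = ∑ i ∈ Finset.range (j + 1), A.indicator 1 (ξ i ω) := by
      have := mul_empDist_apply ξ (Nat.succ_le_succ (Nat.zero_le j)) ω hA
      simpa [Nat.cast_add, Nat.cast_one] using this
    have h2 : (j : ℝ≥0∞) * empDist ξ j ω A
        = ∑ i ∈ Finset.range j, A.indicator 1 (ξ i ω) :=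
      mul_empDist_apply ξ (hn.trans hnj) ω hA
    simp only [Set.mem_preimage, Set.mem_singleton_iff, h1, h2, Finset.sum_range_succ]
    rw [ENNReal.add_sub_cancel_left (sum_indicator_ne_top ξ j ω A)]
    by_cases h : ξ j ω ∈ A <;> simp [Set.indicator_apply, h]
  rw [key]
  have hmt : Measurable[tailField ξ n]
      (fun ω => ((j : ℝ≥0∞) + 1) * empDist ξ (j + 1) ω A - (j : ℝ≥0∞) * empDist ξ j ω A) :=
    ((measurable_tail_apply ξ (hnj.trans (Nat.le_succ j)) hA).const_mul _).sub
      ((measurable_tail_apply ξ hnj hA).const_mul _)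
  exact hmt (measurableSet_singleton 1)

variable {P : Measure Ω} [IsProbabilityMeasure P] {ξ : ℕ → Ω → S}

lemma bdd_integrable {u : Ω → ℝ} (hu : AEStronglyMeasurable u P) {C : ℝ}
    (hb : ∀ ω, |u ω| ≤ C) : Integrable u P :=
  Integrable.mono' (integrable_const C) hu
    (ae_of_all _ fun ω => by simpa [Real.norm_eq_abs] using hb ω)

lemma eta_chi {A : Set S} (hA : MeasurableSet A) (k : ℕ) (ω : Ω) :
    ∫ x, chi A x ∂(empDist ξ k ω) = (empDist ξ k ω A).toReal :=
  integral_indicator_one hA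

lemma eta_nonneg {A : Set S} (hA : MeasurableSet A) (k : ℕ) (ω : Ω) :
    0 ≤ ∫ x, chi A x ∂(empDist ξ k ω) := by
  rw [eta_chi hA]; exact ENNReal.toReal_nonneg

lemma eta_le_one {A : Set S} (hA : MeasurableSet A) (k : ℕ) (ω : Ω) :
    ∫ x, chi A x ∂(empDist ξ k ω) ≤ 1 := by
  rw [integral_empDist ξ k ω (chi_meas hA).stronglyMeasurable]
  rcases Nat.eq_zero_or_pos k with rfl | hk
  · simp
  · have hs : ∑ i ∈ Finset.range k, chi A (ξ i ω) ≤ (k : ℝ) := by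
      calc ∑ i ∈ Finset.range k, chi A (ξ i ω) ≤ ∑ _i ∈ Finset.range k, (1 : ℝ) :=
            Finset.sum_le_sum fun i _ => chi_le_one A _
        _ = (k : ℝ) := by simp
    calc (k : ℝ)⁻¹ * ∑ i ∈ Finset.range k, chi A (ξ i ω) ≤ (k : ℝ)⁻¹ * (k : ℝ) := by
          gcongr
      _ = 1 := by
          rw [inv_mul_cancel₀]
          exact_mod_cast hk.ne'

lemma eta_bound {A : Set S} (hA : MeasurableSet A) (k : ℕ) (ω : Ω) :
    |∫ x, chi A x ∂(empDist ξ k ω)| ≤ 1 := by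
  rw [abs_of_nonneg (eta_nonneg hA k ω)]; exact eta_le_one hA k ω

lemma sm_tail_eta {A : Set S} (hA : MeasurableSet A) (k n : ℕ) (hkn : n ≤ k) :
    StronglyMeasurable[tailField ξ n] fun ω => ∫ x, chi A x ∂(empDist ξ k ω) := by
  simp only [fun ω => eta_chi (ξ := ξ) hA k ω]
  exact ((measurable_tail_apply ξ hkn hA).ennreal_toReal).stronglyMeasurable

lemma integrable_eta (hmeas : ∀ i, Measurable (ξ i)) {A : Set S} (hA : MeasurableSet A) (k : ℕ) :
    Integrable (fun ω => ∫ x, chi A x ∂(empDist ξ k ω)) P :=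
  bdd_integrable (((sm_tail_eta hA k k le_rfl).mono (tailField_le hmeas k)).aestronglyMeasurable)
    (eta_bound hA k)

lemma apply_eq_combo {A : Set S} (hA : MeasurableSet A) (j : ℕ) (ω : Ω) :
    chi A (ξ j ω) = ((j : ℝ) + 1) * ∫ x, chi A x ∂(empDist ξ (j + 1) ω)
      - (j : ℝ) * ∫ x, chi A x ∂(empDist ξ j ω) := by
  rw [integral_empDist ξ (j+1) ω (chi_meas hA).stronglyMeasurable,
    integral_empDist ξ j ω (chi_meas hA).stronglyMeasurable, Finset.sum_range_succ]
  rcases Nat.eq_zero_or_pos j with rfl | hj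
  · simp
  · have h1 : ((j : ℝ) + 1) ≠ 0 := by positivity
    have h2 : (j : ℝ) ≠ 0 := by exact_mod_cast hj.ne'
    push_cast
    field_simp
    ring

/-- Fact A -/
lemma factA (hmeas : ∀ i, Measurable (ξ i)) (hmart : IsReverseMVM P ξ)
    {A : Set S} (hA : MeasurableSet A) {j n : ℕ} (hjn : j < n) :
    P[(fun ω => chi A (ξ j ω)) | tailField ξ n]
      =ᵐ[P] fun ω => ∫ x, chi A x ∂(empDist ξ n ω) := by
  have hbd : ∃ C, ∀ x, |chi A x| ≤ C := ⟨1, chi_bound A⟩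
  rcases Nat.eq_zero_or_pos j with rfl | hj
  · have h := hmart (chi A) (chi_meas hA) hbd 1 n le_rfl hjn
    have he : (fun ω => ∫ x, chi A x ∂(empDist ξ 1 ω)) = fun ω => chi A (ξ 0 ω) := by
      funext ω
      rw [integral_empDist ξ 1 ω (chi_meas hA).stronglyMeasurable]
      simp
    rwa [he] at h
  · have h1 := hmart (chi A) (chi_meas hA) hbd (j + 1) n (Nat.succ_le_succ (Nat.zero_le j)) hjn
    have h2 := hmart (chi A) (chi_meas hA) hbd j n hj hjn.le
    have hfun : (fun ω => chi A (ξ j ω))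
        = ((j : ℝ) + 1) • (fun ω => ∫ x, chi A x ∂(empDist ξ (j + 1) ω))
          - (j : ℝ) • (fun ω => ∫ x, chi A x ∂(empDist ξ j ω)) := by
      funext ω
      simp only [Pi.sub_apply, Pi.smul_apply, smul_eq_mul]
      exact apply_eq_combo hA j ω
    rw [hfun]
    have hint1 : Integrable (((j : ℝ) + 1) • fun ω => ∫ x, chi A x ∂(empDist ξ (j + 1) ω)) P :=
      (integrable_eta hmeas hA (j + 1)).smul _
    have hint2 : Integrable ((j : ℝ) • fun ω => ∫ x, chi A x ∂(empDist ξ j ω)) P :=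
      (integrable_eta hmeas hA j).smul _
    refine (condExp_sub hint1 hint2 _).trans ?_
    have e1 := (condExp_smul (μ := P) (m := tailField ξ n) ((j : ℝ) + 1)
      (fun ω => ∫ x, chi A x ∂(empDist ξ (j + 1) ω))).trans (h1.const_smul ((j : ℝ) + 1))
    have e2 := (condExp_smul (μ := P) (m := tailField ξ n) (j : ℝ)
      (fun ω => ∫ x, chi A x ∂(empDist ξ j ω))).trans (h2.const_smul (j : ℝ))
    refine (e1.sub e2).trans ?_
    filter_upwards with ω
    simp only [Pi.sub_apply, Pi.smul_apply, smul_eq_mul]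
    ring

/-- pull-out integration identity -/
lemma integral_mul_eq (hmeas : ∀ i, Measurable (ξ i)) (m : MeasurableSpace Ω)
    (hm : m ≤ mΩ) {X Y W : Ω → ℝ}
    (hX : Integrable X P) (hXY : P[X|m] =ᵐ[P] Y)
    (hW : StronglyMeasurable[m] W) (hWb : ∀ ω, |W ω| ≤ 1) :
    ∫ ω, W ω * X ω ∂P = ∫ ω, W ω * Y ω ∂P := by
  haveI : SigmaFinite (P.trim hm) := (isFiniteMeasure_trim hm).toSigmaFinite
  have hWX : Integrable (W * X) P :=
    hX.bdd_mul (c := 1) ((hW.mono hm).aestronglyMeasurable)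
      (ae_of_all _ fun ω => by simpa [Real.norm_eq_abs] using hWb ω)
  have h2 := condExp_mul_of_stronglyMeasurable_left hW hWX hX
  calc ∫ ω, W ω * X ω ∂P = ∫ ω, (W * X) ω ∂P := rfl
    _ = ∫ ω, (P[W * X|m]) ω ∂P := (integral_condExp hm).symm
    _ = ∫ ω, (W * P[X|m]) ω ∂P := integral_congr_ae h2
    _ = ∫ ω, W ω * Y ω ∂P := by
        refine integral_congr_ae ?_
        filter_upwards [hXY] with ω h
        simp [h]

lemma eta_prev {m : ℕ} (hm : 1 ≤ m) {A : Set S} (hA : MeasurableSet A) (ω : Ω) :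
    ∫ x, chi A x ∂(empDist ξ m ω)
      = (m : ℝ)⁻¹ * (((m : ℝ) + 1) * ∫ x, chi A x ∂(empDist ξ (m + 1) ω) - chi A (ξ m ω)) := by
  have h := apply_eq_combo (ξ := ξ) hA m ω
  have hm0 : (m : ℝ) ≠ 0 := by exact_mod_cast (Nat.pos_of_ne_zero (by omega)).ne'
  push_cast at h ⊢
  field_simp
  linarith

lemma claim_core (hmeas : ∀ i, Measurable (ξ i)) (hmart : IsReverseMVM P ξ)
    {m : ℕ} (hm : 1 ≤ m) {A B : Set S} (hA : MeasurableSet A) (hB : MeasurableSet B)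
    {W : Ω → ℝ} (hW : StronglyMeasurable[tailField ξ (m + 1)] W) (hWb : ∀ ω, |W ω| ≤ 1) :
    ∫ ω, chi A (ξ 0 ω) * (chi B (ξ m ω) * W ω) ∂P
      = (m : ℝ)⁻¹ * (((m : ℝ) + 1)
            * ∫ ω, ((∫ x, chi A x ∂(empDist ξ (m + 1) ω)) * W ω)
                * (∫ x, chi B x ∂(empDist ξ (m + 1) ω)) ∂P
          - ∫ ω, W ω * (∫ x, chi (A ∩ B) x ∂(empDist ξ (m + 1) ω)) ∂P) := by
  have hWamb : AEStronglyMeasurable W P :=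
    ((hW.mono (tailField_le hmeas (m + 1)))).aestronglyMeasurable
  have hWm : StronglyMeasurable[tailField ξ m] W :=
    hW.mono (tailField_antitone ξ (Nat.le_succ m))
  have hBm : Measurable[tailField ξ m] fun ω => chi B (ξ m ω) :=
    (chi_meas hB).comp (measurable_tail_xi hm le_rfl)
  -- step 1
  have step1 : ∫ ω, chi A (ξ 0 ω) * (chi B (ξ m ω) * W ω) ∂P
      = ∫ ω, (chi B (ξ m ω) * W ω) * (∫ x, chi A x ∂(empDist ξ m ω)) ∂P := by
    rw [show (fun ω => chi A (ξ 0 ω) * (chi B (ξ m ω) * W ω))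
        = fun ω => (chi B (ξ m ω) * W ω) * chi A (ξ 0 ω) from funext fun ω => by ring]
    exact integral_mul_eq hmeas (tailField ξ m) (tailField_le hmeas m)
      (bdd_integrable ((chi_meas hA).comp (hmeas 0)).aestronglyMeasurable
        (fun ω => chi_bound A _))
      (factA hmeas hmart hA hm)
      (hBm.stronglyMeasurable.mul hWm)
      (fun ω => abs_mul_le_one (chi_bound B _) (hWb ω))
  -- step 2 : expand eta at m
  have step2 : ∫ ω, (chi B (ξ m ω) * W ω) * (∫ x, chi A x ∂(empDist ξ m ω)) ∂P
      = (m : ℝ)⁻¹ * (((m : ℝ) + 1)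
            * ∫ ω, (chi B (ξ m ω) * W ω) * (∫ x, chi A x ∂(empDist ξ (m + 1) ω)) ∂P
          - ∫ ω, W ω * chi (A ∩ B) (ξ m ω) ∂P) := by
    have hint1 : Integrable
        (fun ω => (chi B (ξ m ω) * W ω) * (∫ x, chi A x ∂(empDist ξ (m + 1) ω))) P :=
      bdd_integrable
        ((((chi_meas hB).comp (hmeas m)).aestronglyMeasurable.mul hWamb).mul
          (integrable_eta hmeas hA (m + 1)).aestronglyMeasurable)
        (fun ω => abs_mul_le_one (abs_mul_le_one (chi_bound B _) (hWb ω)) (eta_bound hA _ ω))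
    have hint2 : Integrable (fun ω => W ω * chi (A ∩ B) (ξ m ω)) P :=
      bdd_integrable
        (hWamb.mul ((chi_meas (hA.inter hB)).comp (hmeas m)).aestronglyMeasurable)
        (fun ω => abs_mul_le_one (hWb ω) (chi_bound _ _))
    calc ∫ ω, (chi B (ξ m ω) * W ω) * (∫ x, chi A x ∂(empDist ξ m ω)) ∂P
        = ∫ ω, (m : ℝ)⁻¹ • (((m : ℝ) + 1)
              * ((chi B (ξ m ω) * W ω) * (∫ x, chi A x ∂(empDist ξ (m + 1) ω)))
            - W ω * chi (A ∩ B) (ξ m ω)) ∂P := by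
          refine integral_congr_ae (ae_of_all _ fun ω => ?_)
          dsimp only
          rw [eta_prev hm hA ω, smul_eq_mul, ← chi_mul A B]
          ring
      _ = (m : ℝ)⁻¹ * (((m : ℝ) + 1)
            * ∫ ω, (chi B (ξ m ω) * W ω) * (∫ x, chi A x ∂(empDist ξ (m + 1) ω)) ∂P
          - ∫ ω, W ω * chi (A ∩ B) (ξ m ω) ∂P) := by
          rw [integral_smul, smul_eq_mul, integral_sub (hint1.const_mul _) hint2,
            integral_const_mul]
  -- step 3
  have step3 : ∫ ω, (chi B (ξ m ω) * W ω) * (∫ x, chi A x ∂(empDist ξ (m + 1) ω)) ∂P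
      = ∫ ω, ((∫ x, chi A x ∂(empDist ξ (m + 1) ω)) * W ω)
          * (∫ x, chi B x ∂(empDist ξ (m + 1) ω)) ∂P := by
    rw [show (fun ω => (chi B (ξ m ω) * W ω) * (∫ x, chi A x ∂(empDist ξ (m + 1) ω)))
        = fun ω => ((∫ x, chi A x ∂(empDist ξ (m + 1) ω)) * W ω) * chi B (ξ m ω)
        from funext fun ω => by ring]
    exact integral_mul_eq hmeas (tailField ξ (m + 1)) (tailField_le hmeas (m + 1))
      (bdd_integrable ((chi_meas hB).comp (hmeas m)).aestronglyMeasurable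
        (fun ω => chi_bound B _))
      (factA hmeas hmart hB (Nat.lt_succ_self m))
      ((sm_tail_eta hA (m + 1) (m + 1) le_rfl).mul hW)
      (fun ω => abs_mul_le_one (eta_bound hA _ ω) (hWb ω))
  -- step 4
  have step4 : ∫ ω, W ω * chi (A ∩ B) (ξ m ω) ∂P
      = ∫ ω, W ω * (∫ x, chi (A ∩ B) x ∂(empDist ξ (m + 1) ω)) ∂P :=
    integral_mul_eq hmeas (tailField ξ (m + 1)) (tailField_le hmeas (m + 1))
      (bdd_integrable ((chi_meas (hA.inter hB)).comp (hmeas m)).aestronglyMeasurable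
        (fun ω => chi_bound _ _))
      (factA hmeas hmart (hA.inter hB) (Nat.lt_succ_self m))
      hW hWb
  rw [step1, step2, step3, step4]

lemma core_swap (hmeas : ∀ i, Measurable (ξ i)) (hmart : IsReverseMVM P ξ)
    {m : ℕ} (hm : 1 ≤ m) {A B : Set S} (hA : MeasurableSet A) (hB : MeasurableSet B)
    {W : Ω → ℝ} (hW : StronglyMeasurable[tailField ξ (m + 1)] W) (hWb : ∀ ω, |W ω| ≤ 1) :
    ∫ ω, chi A (ξ 0 ω) * (chi B (ξ m ω) * W ω) ∂P
      = ∫ ω, chi B (ξ 0 ω) * (chi A (ξ m ω) * W ω) ∂P := by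
  rw [claim_core hmeas hmart hm hA hB hW hWb, claim_core hmeas hmart hm hB hA hW hWb,
    Set.inter_comm B A]
  have h : ∫ ω, ((∫ x, chi B x ∂(empDist ξ (m + 1) ω)) * W ω)
        * (∫ x, chi A x ∂(empDist ξ (m + 1) ω)) ∂P
      = ∫ ω, ((∫ x, chi A x ∂(empDist ξ (m + 1) ω)) * W ω)
        * (∫ x, chi B x ∂(empDist ξ (m + 1) ω)) ∂P :=
    integral_congr_ae (ae_of_all _ fun ω => by ring)
  rw [h]

end Aux

/-- If the empirical distributions of an infinite sequence in a standard
Borel space form a reverse measure-valued martingale, then for every `n ≥ 2` (one-based)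
the sequence `(ξ_1, ξ_n, ξ_{n+1}, …)` has the same distribution as
`(ξ_n, ξ_1, ξ_{n+1}, …)`; in particular `ξ_1 ≝ ξ_n` for every `n`.
(Here `ξ` is indexed from `0`, so the one-based variable `ξ_j` is `ξ (j - 1)`.) -/
theorem swap_first_with_nth_of_isReverseMVM
    {Ω S : Type*} [MeasurableSpace Ω] [MeasurableSpace S] [StandardBorelSpace S]
    (P : Measure Ω) [IsProbabilityMeasure P] (ξ : ℕ → Ω → S)
    (hmeas : ∀ i, Measurable (ξ i)) (hmart : IsReverseMVM P ξ) :
    (∀ n : ℕ, 2 ≤ n →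
      Measure.map
        (fun ω (k : ℕ) => ξ (if k = 0 then 0 else n + k - 2) ω) P
      = Measure.map
        (fun ω (k : ℕ) => ξ (if k = 0 then n - 1 else if k = 1 then 0 else n + k - 2) ω) P) ∧
    ∀ n : ℕ, Measure.map (ξ n) P = Measure.map (ξ 0) P := by
  classical
  have part1 : ∀ n : ℕ, 2 ≤ n →
      Measure.map (fun ω (k : ℕ) => ξ (if k = 0 then 0 else n + k - 2) ω) P
      = Measure.map
        (fun ω (k : ℕ) => ξ (if k = 0 then n - 1 else if k = 1 then 0 else n + k - 2) ω) P := by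
    intro n hn
    set m : ℕ := n - 1 with hmdef
    have hm : 1 ≤ m := by omega
    have hnm : n = m + 1 := by omega
    set T₁ : Ω → ℕ → S := fun ω (k : ℕ) => ξ (if k = 0 then 0 else n + k - 2) ω with hT₁def
    set T₂ : Ω → ℕ → S :=
      fun ω (k : ℕ) => ξ (if k = 0 then n - 1 else if k = 1 then 0 else n + k - 2) ω with hT₂def
    have hT₁ : Measurable T₁ := measurable_pi_lambda _ fun k => hmeas _
    have hT₂ : Measurable T₂ := measurable_pi_lambda _ fun k => hmeas _
    haveI : IsProbabilityMeasure (Measure.map T₁ P) := Measure.isProbabilityMeasure_map hT₁.aemeasurable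
    haveI : IsProbabilityMeasure (Measure.map T₂ P) := Measure.isProbabilityMeasure_map hT₂.aemeasurable
    refine ext_of_generate_finite (squareCylinders fun _ : ℕ => {A : Set S | MeasurableSet A})
      generateFrom_squareCylinders.symm
      (isPiSystem_squareCylinders (fun _ => MeasurableSpace.isPiSystem_measurableSet)
        (fun _ => MeasurableSet.univ)) ?_ (by simp)
    rintro _ ⟨s, t, ht, rfl⟩
    have htm : ∀ i, MeasurableSet (t i) := fun i => ht i (Set.mem_univ i)
    have hCyl : MeasurableSet ((s : Set ℕ).pi t) :=
      MeasurableSet.pi (Set.to_countable _) fun i _ => htm i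
    rw [Measure.map_apply hT₁ hCyl, Measure.map_apply hT₂ hCyl]
    -- the three pieces
    set A : Set S := if 0 ∈ s then t 0 else Set.univ with hAdef
    set B : Set S := if 1 ∈ s then t 1 else Set.univ with hBdef
    set s' : Finset ℕ := (s.erase 0).erase 1 with hs'def
    set E : Set Ω := ⋂ k ∈ s', ξ (m + k - 1) ⁻¹' t k with hEdef
    have hA : MeasurableSet A := by
      rw [hAdef]; split_ifs; exacts [htm 0, MeasurableSet.univ]
    have hB : MeasurableSet B := by
      rw [hBdef]; split_ifs; exacts [htm 1, MeasurableSet.univ]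
    have hs'2 : ∀ k ∈ s', 2 ≤ k ∧ k ∈ s := by
      intro k hk
      simp only [hs'def, Finset.mem_erase] at hk
      exact ⟨by omega, hk.2.2⟩
    have hE : MeasurableSet[tailField ξ (m + 1)] E := by
      rw [hEdef]
      refine MeasurableSet.biInter (Set.to_countable _) fun k hk => ?_
      have h2 := hs'2 k hk
      exact measurable_tail_xi (le_add_self) (by omega) (htm k)
    have hEamb : MeasurableSet E := tailField_le hmeas (m + 1) _ hE
    -- set identities
    have hset₁ : T₁ ⁻¹' ((s : Set ℕ).pi t) = ξ 0 ⁻¹' A ∩ (ξ m ⁻¹' B ∩ E) := by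
      ext ω
      simp only [Set.mem_preimage, Set.mem_pi, Finset.mem_coe, Set.mem_inter_iff, hEdef,
        Set.mem_iInter, hT₁def]
      constructor
      · intro h
        refine ⟨?_, ?_, ?_⟩
        · rw [hAdef]; split_ifs with h0
          · simpa using h 0 h0
          · exact Set.mem_univ _
        · rw [hBdef]; split_ifs with h1
          · have := h 1 h1
            simp only [if_neg one_ne_zero] at this
            have he : n + 1 - 2 = m := by omega
            rwa [he] at this
          · exact Set.mem_univ _
        · intro k hk
          have h2 := hs'2 k hk
          have := h k h2.2
          have he : (if k = 0 then 0 else n + k - 2) = m + k - 1 := by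
            rw [if_neg (by omega)]; omega
          rwa [he] at this
      · rintro ⟨h0, h1, h2⟩ k hk
        by_cases hk0 : k = 0
        · subst hk0
          simp only [if_pos rfl]
          rw [hAdef] at h0
          rwa [if_pos hk] at h0
        by_cases hk1 : k = 1
        · subst hk1
          simp only [if_neg one_ne_zero]
          rw [hBdef] at h1
          rw [if_pos hk] at h1
          have he : n + 1 - 2 = m := by omega
          rwa [he]
        · have hks' : k ∈ s' := by
            simp only [hs'def, Finset.mem_erase]
            exact ⟨hk1, hk0, hk⟩
          have := h2 k hks'
          have he : (if k = 0 then 0 else n + k - 2) = m + k - 1 := by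
            rw [if_neg hk0]; omega
          rwa [he]
    have hset₂ : T₂ ⁻¹' ((s : Set ℕ).pi t) = ξ 0 ⁻¹' B ∩ (ξ m ⁻¹' A ∩ E) := by
      ext ω
      simp only [Set.mem_preimage, Set.mem_pi, Finset.mem_coe, Set.mem_inter_iff, hEdef,
        Set.mem_iInter, hT₂def]
      constructor
      · intro h
        refine ⟨?_, ?_, ?_⟩
        · rw [hBdef]; split_ifs with h1
          · have := h 1 h1
            simpa using this
          · exact Set.mem_univ _
        · rw [hAdef]; split_ifs with h0
          · have := h 0 h0
            simp only [if_pos rfl] at this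
            have he : n - 1 = m := by omega
            rwa [he] at this
          · exact Set.mem_univ _
        · intro k hk
          have h2 := hs'2 k hk
          have := h k h2.2
          have he : (if k = 0 then n - 1 else if k = 1 then 0 else n + k - 2) = m + k - 1 := by
            rw [if_neg (by omega), if_neg (by omega)]; omega
          rwa [he] at this
      · rintro ⟨h0, h1, h2⟩ k hk
        by_cases hk0 : k = 0
        · subst hk0
          simp only [if_pos rfl]
          rw [hAdef] at h1
          rw [if_pos hk] at h1
          have he : n - 1 = m := by omega
          rwa [he]
        by_cases hk1 : k = 1
        · subst hk1
          simp only [if_neg one_ne_zero, if_pos rfl]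
          rw [hBdef] at h0
          rwa [if_pos hk] at h0
        · have hks' : k ∈ s' := by
            simp only [hs'def, Finset.mem_erase]
            exact ⟨hk1, hk0, hk⟩
          have := h2 k hks'
          have he : (if k = 0 then n - 1 else if k = 1 then 0 else n + k - 2) = m + k - 1 := by
            rw [if_neg hk0, if_neg hk1]; omega
          rwa [he]
    -- integral identities
    have hW : StronglyMeasurable[tailField ξ (m + 1)] (chi E) :=
      ((@measurable_const ℝ Ω _ (tailField ξ (m + 1)) 1).indicator hE).stronglyMeasurable
    have key : ∀ (A' B' : Set S), MeasurableSet A' → MeasurableSet B' →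
        ∫ ω, chi A' (ξ 0 ω) * (chi B' (ξ m ω) * chi E ω) ∂P
          = (P (ξ 0 ⁻¹' A' ∩ (ξ m ⁻¹' B' ∩ E))).toReal := by
      intro A' B' hA' hB'
      have hfe : (fun ω => chi A' (ξ 0 ω) * (chi B' (ξ m ω) * chi E ω))
          = fun ω => chi (ξ 0 ⁻¹' A' ∩ (ξ m ⁻¹' B' ∩ E)) ω := by
        funext ω
        rw [chi_comp A' (ξ 0), chi_comp B' (ξ m), chi_mul, chi_mul]
      rw [hfe, chi_integral ((hmeas 0 hA').inter ((hmeas m hB').inter hEamb))]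
    have hswap := core_swap hmeas hmart hm hA hB hW (fun ω => chi_bound E ω)
    rw [key A B hA hB, key B A hB hA] at hswap
    rw [hset₁, hset₂]
    exact (ENNReal.toReal_eq_toReal_iff' (measure_ne_top P _) (measure_ne_top P _)).mp hswap
  refine ⟨part1, ?_⟩
  intro n
  rcases Nat.eq_zero_or_pos n with rfl | hn
  · rfl
  · have h := part1 (n + 1) (by omega)
    have hT₁ : Measurable (fun ω (k : ℕ) => ξ (if k = 0 then 0 else n + 1 + k - 2) ω) :=
      measurable_pi_lambda _ fun k => hmeas _
    have hT₂ : Measurable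
        (fun ω (k : ℕ) => ξ (if k = 0 then n + 1 - 1 else if k = 1 then 0 else n + 1 + k - 2) ω) :=
      measurable_pi_lambda _ fun k => hmeas _
    have h0 := congrArg (Measure.map (fun x : ℕ → S => x 0)) h
    rw [Measure.map_map (measurable_pi_apply 0) hT₁,
      Measure.map_map (measurable_pi_apply 0) hT₂] at h0
    have e1 : ((fun x : ℕ → S => x 0) ∘ fun ω (k : ℕ) => ξ (if k = 0 then 0 else n + 1 + k - 2) ω)
        = ξ 0 := by funext ω; simp
    have e2 : ((fun x : ℕ → S => x 0)
          ∘ fun ω (k : ℕ) => ξ (if k = 0 then n + 1 - 1 else if k = 1 then 0 else n + 1 + k - 2) ω)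
        = ξ n := by funext ω; simp
    rw [e1, e2] at h0
    exact h0.symm
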